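/- Let n ≥ 1 and consider items 1,…,n with real profits p_i ≥ 0 and real weights w_i satisfying 0 < w_i ≤ W, sorted so that p_1/w_1 ≥ p_2/w_2 ≥ … ≥ p_n/w_n, where W is the real capacity. Suppose k is the smallest index with ∑_{i=1}^{k} w_i > W. Then max{ max_{1≤i≤n} p_i , ∑_{i=1}^{k-1} p_i } ≥ (1/2) · max{ ∑_{i∈S} p_i : S ⊆ {1,…,n}, ∑_{i∈S} w_i ≤ W }. -/

import Mathlib

/-- The greedy algorithm for the knapsack problem (take the better of the greedy
prefix before the break item `k` and the single most profitable item) is a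
`1/2`-approximation. -/
theorem knapsack_greedy_half_approx (n : ℕ) (hn : 1 ≤ n) (W : ℝ) (p w : Fin n → ℝ)
    (hp : ∀ i, 0 ≤ p i) (hw : ∀ i, 0 < w i ∧ w i ≤ W)
    (hsort : ∀ i j : Fin n, i ≤ j → p j / w j ≤ p i / w i)
    (k : Fin n)
    (hk : W < ∑ i ∈ Finset.Iic k, w i)
    (hkmin : ∀ j : Fin n, j < k → ∑ i ∈ Finset.Iic j, w i ≤ W) :
    (1 / 2) * ((Finset.univ.powerset.filter fun S : Finset (Fin n) => ∑ i ∈ S, w i ≤ W).sup'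
        ⟨∅, by
          simp only [Finset.mem_filter, Finset.mem_powerset, Finset.empty_subset,
            Finset.sum_empty, true_and]
          exact le_trans (hw ⟨0, hn⟩).1.le (hw ⟨0, hn⟩).2⟩
        fun S => ∑ i ∈ S, p i)
      ≤ max ((Finset.univ : Finset (Fin n)).sup' ⟨⟨0, hn⟩, Finset.mem_univ _⟩ p)
          (∑ i ∈ Finset.Iio k, p i) := by
  set M := max ((Finset.univ : Finset (Fin n)).sup' ⟨⟨0, hn⟩, Finset.mem_univ _⟩ p)
      (∑ i ∈ Finset.Iio k, p i) with hM
  set A : Finset (Fin n) := Finset.Iic k with hA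
  -- key bound: any feasible S has profit at most profit of A = Iic k
  have key : ∀ S : Finset (Fin n), ∑ i ∈ S, w i ≤ W → ∑ i ∈ S, p i ≤ ∑ i ∈ A, p i := by
    intro S hS
    set r : ℝ := p k / w k with hr
    have hr0 : 0 ≤ r := div_nonneg (hp k) (hw k).1.le
    have h1 : ∀ i ∈ S \ A, p i ≤ r * w i := by
      intro i hi
      simp only [Finset.mem_sdiff, hA, Finset.mem_Iic] at hi
      have hki : k ≤ i := le_of_not_ge hi.2
      have := hsort k i hki
      calc p i = (p i / w i) * w i := by rw [div_mul_cancel₀ _ (hw i).1.ne']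
        _ ≤ r * w i := mul_le_mul_of_nonneg_right this (hw i).1.le
    have h2 : ∀ i ∈ A \ S, r * w i ≤ p i := by
      intro i hi
      simp only [Finset.mem_sdiff, hA, Finset.mem_Iic] at hi
      have := hsort i k hi.1
      calc r * w i ≤ (p i / w i) * w i := mul_le_mul_of_nonneg_right this (hw i).1.le
        _ = p i := by rw [div_mul_cancel₀ _ (hw i).1.ne']
    have e1 : ∑ i ∈ S ∩ A, w i + ∑ i ∈ S \ A, w i = ∑ i ∈ S, w i :=
      Finset.sum_inter_add_sum_sdiff S A w
    have e2 : ∑ i ∈ A ∩ S, w i + ∑ i ∈ A \ S, w i = ∑ i ∈ A, w i :=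
      Finset.sum_inter_add_sum_sdiff A S w
    have e3 : ∑ i ∈ S ∩ A, p i + ∑ i ∈ S \ A, p i = ∑ i ∈ S, p i :=
      Finset.sum_inter_add_sum_sdiff S A p
    have e4 : ∑ i ∈ A ∩ S, p i + ∑ i ∈ A \ S, p i = ∑ i ∈ A, p i :=
      Finset.sum_inter_add_sum_sdiff A S p
    have hcomm : S ∩ A = A ∩ S := Finset.inter_comm S A
    have hw1 : ∑ i ∈ S \ A, w i - ∑ i ∈ A \ S, w i < 0 := by
      have : ∑ i ∈ S, w i < ∑ i ∈ A, w i := lt_of_le_of_lt hS hk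
      rw [← e1, ← e2, hcomm] at this
      linarith
    have hp1 : ∑ i ∈ S \ A, p i ≤ r * ∑ i ∈ S \ A, w i := by
      rw [Finset.mul_sum]
      exact Finset.sum_le_sum h1
    have hp2 : r * ∑ i ∈ A \ S, w i ≤ ∑ i ∈ A \ S, p i := by
      rw [Finset.mul_sum]
      exact Finset.sum_le_sum h2
    have : ∑ i ∈ S \ A, p i - ∑ i ∈ A \ S, p i ≤
        r * (∑ i ∈ S \ A, w i - ∑ i ∈ A \ S, w i) := by
      rw [mul_sub]; linarith
    have hneg : r * (∑ i ∈ S \ A, w i - ∑ i ∈ A \ S, w i) ≤ 0 :=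
      mul_nonpos_of_nonneg_of_nonpos hr0 hw1.le
    rw [← e3, ← e4, hcomm]
    linarith
  -- A's profit ≤ 2 * M
  have hApk : ∑ i ∈ A, p i = ∑ i ∈ Finset.Iio k, p i + p k := by
    rw [hA, ← Finset.Iio_insert, Finset.sum_insert (by simp)]
    ring
  have hpkM : p k ≤ M := le_max_of_le_left (Finset.le_sup' p (Finset.mem_univ k))
  have hIioM : ∑ i ∈ Finset.Iio k, p i ≤ M := le_max_right _ _
  have hA2M : ∑ i ∈ A, p i ≤ 2 * M := by rw [hApk]; linarith
  rw [one_div, inv_mul_le_iff₀ (by norm_num : (0:ℝ) < 2)]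
  apply Finset.sup'_le
  intro S hS
  simp only [Finset.mem_filter, Finset.mem_powerset] at hS
  have := le_trans (key S hS.2) hA2M
  linarith
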